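/- Let A be an m×n real Toeplitz matrix of full rank n (m ≥ n ≥ 2) with AᵀA = RᵀR its Cholesky factorization (R upper triangular with positive diagonal). With the notation y, z̄, u, R_b, R_t as above, the identity R_bᵀR_b = R_tᵀR_t + yyᵀ − uuᵀ − z̄ z̄ᵀ holds. -/
import Mathlib

open Matrix

private lemma shiftSum (f : ℤ → ℝ) (m : ℕ) :
    ∑ k : Fin (m + 1), f (1 - (k : ℤ)) =
      ∑ k : Fin (m + 1), f (-(k : ℤ)) + f 1 - f (-(m : ℤ)) := by
  rw [Fin.sum_univ_succ, Fin.sum_univ_castSucc]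
  have h1 : ∀ k : Fin m, f (1 - ((k.succ : Fin (m+1)) : ℤ)) = f (-((k.castSucc : Fin (m+1)) : ℤ)) := by
    intro k
    congr 1
    push_cast [Fin.val_succ, Fin.coe_castSucc]
    ring
  rw [Finset.sum_congr rfl (fun k _ => h1 k)]
  simp [Fin.last]
  ring

theorem stmt9 (m n : ℕ) (hn : 1 ≤ n) (hmn : n ≤ m)
    (A : Matrix (Fin (m + 1)) (Fin (n + 1)) ℝ) (a : ℤ → ℝ)
    (hA : ∀ (i : Fin (m + 1)) (j : Fin (n + 1)), A i j = a ((j : ℤ) - (i : ℤ)))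
    (hrank : A.rank = n + 1)
    (R : Matrix (Fin (n + 1)) (Fin (n + 1)) ℝ)
    (hupper : ∀ i j : Fin (n + 1), j < i → R i j = 0)
    (hdiag : ∀ i : Fin (n + 1), 0 < R i i)
    (hchol : Aᵀ * A = Rᵀ * R) :
    (R.submatrix Fin.succ Fin.succ)ᵀ * R.submatrix Fin.succ Fin.succ =
      (R.submatrix Fin.castSucc Fin.castSucc)ᵀ *
          R.submatrix Fin.castSucc Fin.castSucc +
        Matrix.vecMulVec (fun t : Fin n => a ((t : ℤ) + 1))
          (fun t : Fin n => a ((t : ℤ) + 1)) -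
        Matrix.vecMulVec (fun j : Fin n => R 0 j.succ)
          (fun j : Fin n => R 0 j.succ) -
        Matrix.vecMulVec (fun t : Fin n => a ((t : ℤ) - (m : ℤ)))
          (fun t : Fin n => a ((t : ℤ) - (m : ℤ))) := by
  ext i j
  have key := fun (p q : Fin (n+1)) => congrFun (congrFun hchol p) q
  -- entry equalities
  have E1 : ∑ k : Fin (m + 1), A k i.succ * A k j.succ
      = ∑ k : Fin (n + 1), R k i.succ * R k j.succ := by
    have := key i.succ j.succ
    simpa [Matrix.mul_apply, Matrix.transpose_apply] using this
  have E2 : ∑ k : Fin (m + 1), A k i.castSucc * A k j.castSucc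
      = ∑ k : Fin (n + 1), R k i.castSucc * R k j.castSucc := by
    have := key i.castSucc j.castSucc
    simpa [Matrix.mul_apply, Matrix.transpose_apply] using this
  set f : ℤ → ℝ := fun t => a ((i : ℤ) + t) * a ((j : ℤ) + t) with hf
  have hA1 : ∀ k : Fin (m + 1), A k i.succ * A k j.succ = f (1 - (k : ℤ)) := by
    intro k
    simp only [hA, hf, Fin.val_succ]
    push_cast
    ring_nf
  have hA2 : ∀ k : Fin (m + 1), A k i.castSucc * A k j.castSucc = f (-(k : ℤ)) := by
    intro k
    simp only [hA, hf, Fin.coe_castSucc]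
    push_cast
    ring_nf
  rw [Finset.sum_congr rfl (fun k _ => hA1 k)] at E1
  rw [Finset.sum_congr rfl (fun k _ => hA2 k)] at E2
  have hshift := shiftSum f m
  -- split R sums
  have S1 : ∑ k : Fin (n + 1), R k i.succ * R k j.succ
      = R 0 i.succ * R 0 j.succ + ∑ k : Fin n, R k.succ i.succ * R k.succ j.succ := by
    rw [Fin.sum_univ_succ]
  have hlast : R (Fin.last n) i.castSucc = 0 :=
    hupper _ _ (Fin.castSucc_lt_last i)
  have S2 : ∑ k : Fin (n + 1), R k i.castSucc * R k j.castSucc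
      = ∑ k : Fin n, R k.castSucc i.castSucc * R k.castSucc j.castSucc := by
    rw [Fin.sum_univ_castSucc, hlast]
    ring_nf
  rw [S1] at E1
  rw [S2] at E2
  simp only [Matrix.sub_apply, Matrix.add_apply, Matrix.mul_apply, Matrix.transpose_apply,
    Matrix.submatrix_apply, Matrix.vecMulVec_apply]
  have hf1 : f 1 = a ((i : ℤ) + 1) * a ((j : ℤ) + 1) := rfl
  have hfm : f (-(m : ℤ)) = a ((i : ℤ) - (m : ℤ)) * a ((j : ℤ) - (m : ℤ)) := by
    simp only [hf]; ring_nf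
  linarith [E1, E2, hshift]
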